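/- arXiv:1309.1941 — 3 statements merged into one kernel-verified Lean document; each statement's English description precedes it below -/
import Mathlib

section
/- Let P and Q be graph polynomials with integer coefficients. The following are equivalent: (i) for every pair of similar graphs G₁, G₂, if P(G₁;X)=P(G₂;X) then Q(G₁;X)=Q(G₂;X); (ii) there exists a function F : ℕ × ℕ × ℕ × ℤ[X] → ℤ[X] such that for every finite simple graph G one has F(n(G), m(G), k(G), P(G;X)) = Q(G;X). -/
open Polynomial

noncomputable def numEdges {n : ℕ} (G : SimpleGraph (Fin n)) : ℕ := G.edgeSet.ncard

noncomputable def numComponents {n : ℕ} (G : SimpleGraph (Fin n)) : ℕ :=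
  Nat.card G.ConnectedComponent

def SimilarGraphs {n₁ n₂ : ℕ} (G₁ : SimpleGraph (Fin n₁)) (G₂ : SimpleGraph (Fin n₂)) : Prop :=
  n₁ = n₂ ∧ numEdges G₁ = numEdges G₂ ∧ numComponents G₁ = numComponents G₂

def IsGraphPolynomial (P : ∀ n : ℕ, SimpleGraph (Fin n) → Polynomial ℤ) : Prop :=
  ∀ (n : ℕ) (G H : SimpleGraph (Fin n)), Nonempty (G ≃g H) → P n G = P n H

def DPEquiv (P Q : ∀ n : ℕ, SimpleGraph (Fin n) → Polynomial ℤ) : Prop :=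
  ∀ (n₁ n₂ : ℕ) (G₁ : SimpleGraph (Fin n₁)) (G₂ : SimpleGraph (Fin n₂)),
    SimilarGraphs G₁ G₂ → (P n₁ G₁ = P n₂ G₂ ↔ Q n₁ G₁ = Q n₂ G₂)

/-- For graph polynomials P and Q with integer coefficients, the following are
equivalent: (i) for every pair of similar graphs, equality of the P-polynomials implies
equality of the Q-polynomials; (ii) there is a function F with
F(n(G), m(G), k(G), P(G;X)) = Q(G;X) for every graph G. -/
theorem stmt_0 (P Q : ∀ n : ℕ, SimpleGraph (Fin n) → Polynomial ℤ)
    (hP : IsGraphPolynomial P) (hQ : IsGraphPolynomial Q) :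
    (∀ (n₁ n₂ : ℕ) (G₁ : SimpleGraph (Fin n₁)) (G₂ : SimpleGraph (Fin n₂)),
        SimilarGraphs G₁ G₂ → P n₁ G₁ = P n₂ G₂ → Q n₁ G₁ = Q n₂ G₂) ↔
    (∃ F : ℕ × ℕ × ℕ × Polynomial ℤ → Polynomial ℤ,
        ∀ (n : ℕ) (G : SimpleGraph (Fin n)),
          F (n, numEdges G, numComponents G, P n G) = Q n G) := by
  constructor
  · intro h
    classical
    refine ⟨fun x => if hx : ∃ G : SimpleGraph (Fin x.1), numEdges G = x.2.1 ∧
        numComponents G = x.2.2.1 ∧ P x.1 G = x.2.2.2 then Q x.1 hx.choose else 0, ?_⟩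
    intro n G
    have hx : ∃ G' : SimpleGraph (Fin n), numEdges G' = numEdges G ∧
        numComponents G' = numComponents G ∧ P n G' = P n G := ⟨G, rfl, rfl, rfl⟩
    simp only
    rw [dif_pos hx]
    obtain ⟨h1, h2, h3⟩ := hx.choose_spec
    exact h n n hx.choose G ⟨rfl, h1, h2⟩ h3
  · rintro ⟨F, hF⟩ n₁ n₂ G₁ G₂ ⟨hn, hm, hk⟩ hP'
    subst hn
    rw [← hF n₁ G₁, ← hF n₁ G₂, hm, hk, hP']
end

section
/- Let F be a forest (a finite simple acyclic graph) with n vertices. Then the characteristic polynomial of the adjacency matrix of F equals the matching defect polynomial of F, i.e. det(X·I − A_F) = ∑_{k=0}^{⌊n/2⌋} (−1)^k m_k(F) X^{n−2k}. -/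
open Polynomial

/-- A finset of edges is a matching set: the edges belong to the graph and are pairwise
vertex-disjoint. -/
def IsMatchingSet {V : Type*} (G : SimpleGraph V) (M : Finset (Sym2 V)) : Prop :=
  (↑M : Set (Sym2 V)) ⊆ G.edgeSet ∧
    ∀ e ∈ M, ∀ f ∈ M, e ≠ f → ∀ v : V, ¬(v ∈ e ∧ v ∈ f)

/-- The number of matchings of size k in G. -/
noncomputable def matchCount {V : Type*} [Fintype V] (G : SimpleGraph V) (k : ℕ) : ℕ :=
  Set.ncard {M : Finset (Sym2 V) | IsMatchingSet G M ∧ M.card = k}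

namespace Stmt5Aux
variable {n : ℕ}

def ES (F : SimpleGraph (Fin n)) (σ : Equiv.Perm (Fin n)) : Prop :=
  ∀ i, σ i ≠ i → F.Adj (σ i) i

theorem ES.invol {F : SimpleGraph (Fin n)} (hF : F.IsAcyclic) {σ : Equiv.Perm (Fin n)}
    (hσ : ES F σ) (i : Fin n) : σ (σ i) = i := by
  by_contra hne
  have hfix : σ i ≠ i := fun h => hne (by rw [h, h])
  set m := Function.minimalPeriod (⇑σ) i with hm
  have hiper : i ∈ Function.periodicPts (⇑σ) :=
    ⟨orderOf σ, orderOf_pos σ, by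
      simp [Function.IsPeriodicPt, Function.IsFixedPt, Equiv.Perm.iterate_eq_pow, pow_orderOf_eq_one]⟩
  have hmpos : 0 < m := Function.minimalPeriod_pos_iff_mem_periodicPts.mpr hiper
  have hper : (⇑σ)^[m] i = i := Function.iterate_minimalPeriod
  have hm1 : m ≠ 1 := fun h => hfix (by simpa [h] using hper)
  have hm2 : m ≠ 2 := fun h => hne (by
    have := hper
    rw [h] at this
    simpa [Function.iterate_succ_apply'] using this)
  have hm3 : 3 ≤ m := by omega
  have hinj : Set.InjOn (fun k => (⇑σ)^[k] i) (Set.Iio m) :=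
    Function.iterate_injOn_Iio_minimalPeriod
  -- the bridge
  have hbr : F.IsBridge s(i, σ i) :=
    SimpleGraph.isAcyclic_iff_forall_adj_isBridge.mp hF (hσ i hfix).symm
  rw [SimpleGraph.isBridge_iff] at hbr
  set G' := F \ SimpleGraph.fromEdgeSet {s(i, σ i)} with hG'
  -- adjacency steps avoiding the bridge edge
  have hstep : ∀ k, 1 ≤ k → k + 1 < m → G'.Adj ((⇑σ)^[k] i) ((⇑σ)^[k+1] i) := by
    intro k hk1 hkm
    have hkm' : k < m := by omega
    have hne' : (⇑σ)^[k+1] i ≠ (⇑σ)^[k] i := by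
      intro h
      have := hinj (by exact hkm : k + 1 < m) hkm' h
      omega
    have hsucc : (⇑σ)^[k+1] i = σ ((⇑σ)^[k] i) := Function.iterate_succ_apply' _ _ _
    have hadjF : F.Adj ((⇑σ)^[k] i) ((⇑σ)^[k+1] i) := by
      have := hσ ((⇑σ)^[k] i) (by rwa [hsucc] at hne')
      rw [← hsucc] at this
      exact this.symm
    rw [hG', SimpleGraph.sdiff_adj]
    refine ⟨hadjF, ?_⟩
    rw [SimpleGraph.fromEdgeSet_adj]
    rintro ⟨hmem, -⟩
    simp only [Set.mem_singleton_iff, Sym2.eq_iff] at hmem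
    rcases hmem with ⟨h1, h2⟩ | ⟨h1, h2⟩
    · have : k = 0 := by
        have := hinj hkm' (by omega : (0:ℕ) < m) (by simpa using h1)
        omega
      omega
    · have : k + 1 = 0 := by
        have := hinj (by exact hkm) (by omega : (0:ℕ) < m) (by simpa using h2)
        omega
      omega
  -- reachability along the cycle
  have hreach : ∀ k, 1 ≤ k → k < m → G'.Reachable (σ i) ((⇑σ)^[k] i) := by
    intro k
    induction k with
    | zero => omega
    | succ k ih =>
      intro _ hkm
      rcases Nat.eq_or_lt_of_le (by omega : 1 ≤ k + 1) with h1 | h1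
      · rw [← h1]
        simpa using SimpleGraph.Reachable.refl (G := G') (σ i)
      · have hk1 : 1 ≤ k := by omega
        exact (ih hk1 (by omega)).trans (hstep k hk1 hkm).reachable
  -- final edge back to i
  have hlast : G'.Adj ((⇑σ)^[m-1] i) i := by
    have hne' : (⇑σ)^[m-1] i ≠ i := by
      intro h
      have := hinj (by omega : m - 1 < m) (by omega : (0:ℕ) < m) (by simpa using h)
      omega
    have hσlast : σ ((⇑σ)^[m-1] i) = i := by
      rw [← Function.iterate_succ_apply' (⇑σ) (m-1) i]
      have h' : (m - 1).succ = m := by omega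
      rw [h']; exact hper
    have hadjF : F.Adj ((⇑σ)^[m-1] i) i := by
      have := hσ ((⇑σ)^[m-1] i) (by rw [hσlast]; exact fun h => hne' h.symm)
      rw [hσlast] at this
      exact this.symm
    rw [hG', SimpleGraph.sdiff_adj]
    refine ⟨hadjF, ?_⟩
    rw [SimpleGraph.fromEdgeSet_adj]
    rintro ⟨hmem, -⟩
    simp only [Set.mem_singleton_iff, Sym2.eq_iff] at hmem
    rcases hmem with ⟨h1, h2⟩ | ⟨h1, h2⟩
    · exact (by
        have := hinj (by omega : m - 1 < m) (by omega : (0:ℕ) < m) (by simpa using h1)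
        omega)
    · have : m - 1 = 1 := by
        have := hinj (by omega : m - 1 < m) (by omega : (1:ℕ) < m) (by simpa using h1)
        omega
      omega
  exact hbr (((hreach (m-1) (by omega) (by omega)).trans hlast.reachable).symm)

/-- edges of a permutation -/
def mEdges (σ : Equiv.Perm (Fin n)) : Finset (Sym2 (Fin n)) :=
  σ.support.image (fun i => s(i, σ i))

lemma mem_mEdges {σ : Equiv.Perm (Fin n)} {e : Sym2 (Fin n)} :
    e ∈ mEdges σ ↔ ∃ i, σ i ≠ i ∧ s(i, σ i) = e := by
  simp [mEdges, Equiv.Perm.mem_support]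

lemma mEdges_eq_of_mem {σ : Equiv.Perm (Fin n)} (hσ : ∀ i, σ (σ i) = i)
    {e : Sym2 (Fin n)} (he : e ∈ mEdges σ) {v : Fin n} (hv : v ∈ e) :
    e = s(v, σ v) ∧ σ v ≠ v := by
  obtain ⟨i, hi, rfl⟩ := mem_mEdges.mp he
  rw [Sym2.mem_iff] at hv
  rcases hv with rfl | rfl
  · exact ⟨rfl, hi⟩
  · constructor
    · rw [Sym2.eq_swap, hσ i]
    · rw [hσ i]; exact fun h => hi h.symm

lemma mEdges_matching {F : SimpleGraph (Fin n)} {σ : Equiv.Perm (Fin n)}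
    (hES : ES F σ) (hσ : ∀ i, σ (σ i) = i) : IsMatchingSet F (mEdges σ) := by
  constructor
  · intro e he
    obtain ⟨i, hi, rfl⟩ := mem_mEdges.mp (by exact_mod_cast he)
    rw [SimpleGraph.mem_edgeSet]
    exact (hES i hi).symm
  · intro e he f hf hef v ⟨hve, hvf⟩
    exact hef ((mEdges_eq_of_mem hσ he hve).1.trans (mEdges_eq_of_mem hσ hf hvf).1.symm)

lemma card_support_eq {σ : Equiv.Perm (Fin n)} (hσ : ∀ i, σ (σ i) = i) :
    σ.support.card = 2 * (mEdges σ).card := by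
  have hsupp : σ.support = (mEdges σ).biUnion (fun e => Finset.univ.filter (· ∈ e)) := by
    ext v
    simp only [Finset.mem_biUnion, Finset.mem_filter, Finset.mem_univ, true_and,
      Equiv.Perm.mem_support]
    constructor
    · intro hv
      exact ⟨s(v, σ v), mem_mEdges.mpr ⟨v, hv, rfl⟩, Sym2.mem_mk_left _ _⟩
    · rintro ⟨e, he, hve⟩
      exact (mEdges_eq_of_mem hσ he hve).2
  rw [hsupp, Finset.card_biUnion, mul_comm]
  · rw [Finset.sum_congr rfl (fun e he => ?_), Finset.sum_const, smul_eq_mul]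
    obtain ⟨i, hi, rfl⟩ := mem_mEdges.mp he
    have : Finset.univ.filter (· ∈ s(i, σ i)) = {i, σ i} := by
      ext v; simp [Sym2.mem_iff]
    rw [this, Finset.card_insert_of_notMem (by simpa using fun h => hi h.symm),
      Finset.card_singleton]
  · intro e he f hf hef
    rw [Function.onFun, Finset.disjoint_left]
    intro v hv hv'
    simp only [Finset.mem_filter] at hv hv'
    exact hef ((mEdges_eq_of_mem hσ he hv.2).1.trans (mEdges_eq_of_mem hσ hf hv'.2).1.symm)

lemma sign_eq {σ : Equiv.Perm (Fin n)} (hσ : ∀ i, σ (σ i) = i) :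
    Equiv.Perm.sign σ = (-1 : ℤˣ) ^ (mEdges σ).card := by
  have horder : σ ^ 2 = 1 := by
    ext i; simp [pow_succ, hσ i]
  have hdvd : orderOf σ ∣ 2 := orderOf_dvd_of_pow_eq_one horder
  have hcyc : ∀ c ∈ σ.cycleType, c = 2 := by
    intro c hc
    have h2 : 2 ≤ c := Equiv.Perm.two_le_of_mem_cycleType hc
    have : c ∣ 2 := dvd_trans (by rw [← Equiv.Perm.lcm_cycleType]; exact Multiset.dvd_lcm hc) hdvd
    exact le_antisymm (Nat.le_of_dvd two_pos this) h2
  have hsum : σ.cycleType.sum = 2 * Multiset.card σ.cycleType := by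
    rw [Multiset.eq_replicate_of_mem hcyc, Multiset.sum_replicate]
    simp [mul_comm, Multiset.card_replicate]
  have hcard : Multiset.card σ.cycleType = (mEdges σ).card := by
    have h1 := Equiv.Perm.sum_cycleType σ
    have h2 := card_support_eq hσ
    omega
  rw [Equiv.Perm.sign_of_cycleType, hsum, hcard, pow_add, pow_mul, neg_one_sq, one_pow, one_mul]
variable {F : SimpleGraph (Fin n)}

lemma matching_unique {M : Finset (Sym2 (Fin n))} (hM : IsMatchingSet F M)
    {e f : Sym2 (Fin n)} (he : e ∈ M) (hf : f ∈ M) {v : Fin n}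
    (hve : v ∈ e) (hvf : v ∈ f) : e = f :=
  by_contra fun h => hM.2 e he f hf h v ⟨hve, hvf⟩

/-- the involution associated to a matching -/
noncomputable def mFun (M : Finset (Sym2 (Fin n))) (v : Fin n) : Fin n :=
  if h : ∃ e ∈ M, v ∈ e then Sym2.Mem.other h.choose_spec.2 else v

lemma mFun_spec {M : Finset (Sym2 (Fin n))} (hM : IsMatchingSet F M)
    {v : Fin n} {e : Sym2 (Fin n)} (he : e ∈ M) (hv : v ∈ e) :
    s(v, mFun M v) = e := by
  have h : ∃ e ∈ M, v ∈ e := ⟨e, he, hv⟩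
  rw [mFun, dif_pos h, Sym2.other_spec]
  exact matching_unique hM h.choose_spec.1 he h.choose_spec.2 hv

lemma mFun_fixed {M : Finset (Sym2 (Fin n))} {v : Fin n}
    (h : ¬ ∃ e ∈ M, v ∈ e) : mFun M v = v := dif_neg h

lemma mFun_invol {M : Finset (Sym2 (Fin n))} (hM : IsMatchingSet F M) :
    Function.Involutive (mFun M) := by
  intro v
  by_cases h : ∃ e ∈ M, v ∈ e
  · obtain ⟨e, he, hv⟩ := h
    have h1 : s(v, mFun M v) = e := mFun_spec hM he hv
    have h2 : mFun M v ∈ e := h1 ▸ Sym2.mem_mk_right v _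
    have h3 : s(mFun M v, mFun M (mFun M v)) = e := mFun_spec hM he h2
    rw [← h1] at h3
    rcases Sym2.eq_iff.mp h3 with ⟨hw, hx⟩ | ⟨-, hx⟩
    · rw [hx, hw]
    · exact hx
  · rw [mFun_fixed h, mFun_fixed h]

/-- the permutation associated to a matching -/
noncomputable def mPerm {M : Finset (Sym2 (Fin n))} (hM : IsMatchingSet F M) :
    Equiv.Perm (Fin n) :=
  Function.Involutive.toPerm (mFun M) (mFun_invol hM)

lemma mPerm_apply {M : Finset (Sym2 (Fin n))} (hM : IsMatchingSet F M) (v : Fin n) :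
    mPerm hM v = mFun M v := rfl

lemma mPerm_ES {M : Finset (Sym2 (Fin n))} (hM : IsMatchingSet F M) :
    ES F (mPerm hM) := by
  intro v hv
  rw [mPerm_apply] at *
  by_cases h : ∃ e ∈ M, v ∈ e
  · obtain ⟨e, he, hve⟩ := h
    have h1 : s(v, mFun M v) = e := mFun_spec hM he hve
    have : s(v, mFun M v) ∈ F.edgeSet := h1 ▸ hM.1 he
    rw [SimpleGraph.mem_edgeSet] at this
    exact this.symm
  · exact absurd (mFun_fixed h) hv

lemma mEdges_mPerm {M : Finset (Sym2 (Fin n))} (hM : IsMatchingSet F M) :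
    mEdges (mPerm hM) = M := by
  ext e
  rw [mem_mEdges]
  constructor
  · rintro ⟨i, hi, rfl⟩
    rw [mPerm_apply] at *
    by_cases h : ∃ e ∈ M, i ∈ e
    · obtain ⟨e, he, hie⟩ := h
      rw [mFun_spec hM he hie]
      exact he
    · exact absurd (mFun_fixed h) hi
  · intro he
    induction e using Sym2.ind with
    | _ x y =>
      have hxy : x ≠ y := by
        have := hM.1 he
        rw [SimpleGraph.mem_edgeSet] at this
        exact this.ne
      have hx : x ∈ s(x, y) := Sym2.mem_mk_left _ _
      have h1 : s(x, mFun M x) = s(x, y) := mFun_spec hM he hx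
      have h2 : mFun M x = y := Sym2.congr_right.mp h1
      refine ⟨x, ?_, ?_⟩
      · rw [mPerm_apply, h2]; exact fun h => hxy h.symm
      · rw [mPerm_apply, h2]

lemma mEdges_inj {σ τ : Equiv.Perm (Fin n)}
    (hσ : ∀ i, σ (σ i) = i) (hτ : ∀ i, τ (τ i) = i)
    (h : mEdges σ = mEdges τ) : σ = τ := by
  have key : ∀ (σ τ : Equiv.Perm (Fin n)), (∀ i, τ (τ i) = i) → mEdges σ = mEdges τ →
      ∀ i, σ i ≠ i → σ i = τ i := by
    intro σ τ hτ h i hi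
    have : s(i, σ i) ∈ mEdges τ := h ▸ mem_mEdges.mpr ⟨i, hi, rfl⟩
    obtain ⟨j, hj, hje⟩ := mem_mEdges.mp this
    rcases Sym2.eq_iff.mp hje with ⟨rfl, h2⟩ | ⟨h1, h2⟩
    · exact h2.symm
    · subst h1
      calc σ i = τ (τ (σ i)) := (hτ _).symm
        _ = τ i := by rw [h2]
  refine Equiv.ext fun i => ?_
  by_cases hi : σ i = i
  · by_cases hj : τ i = i
    · rw [hi, hj]
    · exact absurd ((key τ σ hσ h.symm i hj).trans hi) hj
  · exact key σ τ hτ h i hi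
end Stmt5Aux

open Stmt5Aux in
/-- For a forest F on n vertices, the characteristic polynomial of its
adjacency matrix equals the matching defect polynomial
∑_{k=0}^{⌊n/2⌋} (−1)^k m_k(F) X^{n−2k}. -/
theorem stmt_5 (n : ℕ) (F : SimpleGraph (Fin n)) [DecidableRel F.Adj]
    (hF : F.IsAcyclic) :
    (F.adjMatrix ℤ).charpoly =
      ∑ k ∈ Finset.range (n / 2 + 1),
        C ((-1) ^ k * (matchCount F k : ℤ)) * X ^ (n - 2 * k) := by
  classical
  have hdet : (F.adjMatrix ℤ).charpoly
      = ∑ σ : Equiv.Perm (Fin n), ((Equiv.Perm.sign σ : ℤ) : ℤ[X]) *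
          ∏ i, Matrix.charmatrix (F.adjMatrix ℤ) (σ i) i := by
    rw [show (F.adjMatrix ℤ).charpoly = (Matrix.charmatrix (F.adjMatrix ℤ)).det from rfl,
      Matrix.det_apply']
  rw [hdet, ← Finset.sum_filter_add_sum_filter_not Finset.univ (ES F)]
  have hzero : ∑ σ ∈ Finset.univ.filter (fun σ => ¬ ES F σ),
      ((Equiv.Perm.sign σ : ℤ) : ℤ[X]) * ∏ i, Matrix.charmatrix (F.adjMatrix ℤ) (σ i) i = 0 := by
    apply Finset.sum_eq_zero
    intro σ hσ
    rw [Finset.mem_filter] at hσ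
    have := hσ.2
    rw [ES] at this
    push_neg at this
    obtain ⟨i, hi, hadj⟩ := this
    have hentry : Matrix.charmatrix (F.adjMatrix ℤ) (σ i) i = 0 := by
      rw [Matrix.charmatrix_apply_ne _ _ _ hi]
      simp [SimpleGraph.adjMatrix_apply, hadj]
    have hp : ∏ i, Matrix.charmatrix (F.adjMatrix ℤ) (σ i) i = 0 :=
      Finset.prod_eq_zero (Finset.mem_univ i) hentry
    rw [hp, mul_zero]
  rw [hzero, add_zero]
  set g : Finset (Sym2 (Fin n)) → ℤ[X] :=
    fun M => (-1 : ℤ[X]) ^ M.card * X ^ (n - 2 * M.card) with hg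
  have hterm : ∀ σ ∈ Finset.univ.filter (ES F),
      ((Equiv.Perm.sign σ : ℤ) : ℤ[X]) * ∏ i, Matrix.charmatrix (F.adjMatrix ℤ) (σ i) i
        = g (mEdges σ) := by
    intro σ hσ
    rw [Finset.mem_filter] at hσ
    have hES := hσ.2
    have hinv := ES.invol hF hES
    have hsplit : ∏ i, Matrix.charmatrix (F.adjMatrix ℤ) (σ i) i
        = (∏ i ∈ σ.support, Matrix.charmatrix (F.adjMatrix ℤ) (σ i) i) *
          ∏ i ∈ σ.supportᶜ, Matrix.charmatrix (F.adjMatrix ℤ) (σ i) i :=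
      (Finset.prod_mul_prod_compl _ _).symm
    have h1 : ∏ i ∈ σ.support, Matrix.charmatrix (F.adjMatrix ℤ) (σ i) i
        = (-1 : ℤ[X]) ^ σ.support.card := by
      rw [Finset.prod_congr rfl (fun i hi => ?_), Finset.prod_const]
      rw [Equiv.Perm.mem_support] at hi
      rw [Matrix.charmatrix_apply_ne _ _ _ hi]
      simp [SimpleGraph.adjMatrix_apply, hES i hi]
    have h2 : ∏ i ∈ σ.supportᶜ, Matrix.charmatrix (F.adjMatrix ℤ) (σ i) i
        = (X : ℤ[X]) ^ (n - σ.support.card) := by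
      rw [Finset.prod_congr rfl (fun i hi => ?_), Finset.prod_const,
        Finset.card_compl, Fintype.card_fin]
      rw [Finset.mem_compl, Equiv.Perm.mem_support, not_not] at hi
      rw [hi, Matrix.charmatrix_apply_eq]
      simp
    have hsign : ((Equiv.Perm.sign σ : ℤ) : ℤ[X]) = (-1 : ℤ[X]) ^ (mEdges σ).card := by
      rw [sign_eq hinv]
      push_cast
      ring
    have hcard := card_support_eq hinv
    rw [hsplit, h1, h2, hsign, hcard, hg]
    rw [pow_mul, neg_one_sq, one_pow, one_mul]
  rw [Finset.sum_congr rfl hterm]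
  have hbij : ∑ σ ∈ Finset.univ.filter (ES F), g (mEdges σ)
      = ∑ M ∈ Finset.univ.filter (fun M => IsMatchingSet F M), g M := by
    refine Finset.sum_bij (fun σ _ => mEdges σ) ?_ ?_ ?_ ?_
    · intro σ hσ
      rw [Finset.mem_filter] at *
      exact ⟨Finset.mem_univ _, mEdges_matching hσ.2 (ES.invol hF hσ.2)⟩
    · intro σ hσ τ hτ h
      rw [Finset.mem_filter] at *
      exact mEdges_inj (ES.invol hF hσ.2) (ES.invol hF hτ.2) h
    · intro M hM
      rw [Finset.mem_filter] at hM
      exact ⟨mPerm hM.2, Finset.mem_filter.mpr ⟨Finset.mem_univ _, mPerm_ES hM.2⟩,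
        mEdges_mPerm hM.2⟩
    · intro σ hσ; rfl
  rw [hbij]
  have hmaps : ∀ M ∈ Finset.univ.filter (fun M => IsMatchingSet F M),
      M.card ∈ Finset.range (n / 2 + 1) := by
    intro M hM
    rw [Finset.mem_filter] at hM
    have hinvol : ∀ i, mPerm hM.2 (mPerm hM.2 i) = i := fun i => mFun_invol hM.2 i
    have h1 := card_support_eq hinvol
    rw [mEdges_mPerm hM.2] at h1
    have h2 : (mPerm hM.2).support.card ≤ n := by
      have := Finset.card_le_univ (mPerm hM.2).support
      simpa [Fintype.card_fin] using this
    rw [Finset.mem_range]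
    omega
  rw [← Finset.sum_fiberwise_of_maps_to hmaps g]
  refine Finset.sum_congr rfl fun k hk => ?_
  have hconst : ∀ M ∈ (Finset.univ.filter (fun M => IsMatchingSet F M)).filter
      (fun M => M.card = k), g M = (-1 : ℤ[X]) ^ k * X ^ (n - 2 * k) := by
    intro M hM
    rw [Finset.mem_filter] at hM
    rw [hg]
    simp only
    rw [hM.2]
  rw [Finset.sum_congr rfl hconst, Finset.sum_const]
  have hcount : ((Finset.univ.filter (fun M => IsMatchingSet F M)).filter
      (fun M => M.card = k)).card = matchCount F k := by
    rw [matchCount]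
    rw [show {M : Finset (Sym2 (Fin n)) | IsMatchingSet F M ∧ M.card = k}
        = ↑((Finset.univ.filter (fun M => IsMatchingSet F M)).filter (fun M => M.card = k))
      by ext M; simp]
    rw [Set.ncard_coe_finset]
  rw [hcount, nsmul_eq_mul]
  simp only [map_mul, map_pow, map_neg, map_one, map_natCast]
  ring
end

section
/- Let r be a fixed natural number and let P be a graph polynomial with integer coefficients such that for every finite simple graph G with at least one vertex the polynomial P(G;X) = ∑_{i=0}^{d(G)} h_i(G) X^i is nonzero and satisfies |h_i(G)| ≤ n(G)^r for all i. Define P₁(G;X) = P(G; n(G)^r · X). Then P₁ is d.p.-equivalent to P (on graphs with at least one vertex), and for every such graph G every complex root ξ of P₁(G;X) satisfies |ξ| ≤ 2. -/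
open Polynomial

lemma coeff_comp_C_mul_X (p : Polynomial ℤ) (c : ℤ) (i : ℕ) :
    (p.comp (C c * X)).coeff i = p.coeff i * c ^ i := by
  induction p using Polynomial.induction_on' with
  | add p q hp hq => simp only [add_comp, coeff_add, hp, hq, add_mul]
  | monomial k a =>
    rw [← C_mul_X_pow_eq_monomial, mul_comp, C_comp, pow_comp, X_comp,
      mul_pow, ← C_pow]
    simp only [coeff_C_mul, coeff_X_pow]
    split_ifs with h
    · subst h; ring
    · ring

/-- Let r ∈ ℕ and P a graph polynomial with integer coefficients such that for
every graph G with at least one vertex, P(G;X) is nonzero with all coefficients bounded by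
n(G)^r in absolute value. Then P₁(G;X) = P(G; n(G)^r·X) is d.p.-equivalent to P on graphs
with at least one vertex, and every complex root ξ of P₁(G;X) satisfies |ξ| ≤ 2. -/
theorem stmt_18 (r : ℕ) (P : ∀ n : ℕ, SimpleGraph (Fin n) → Polynomial ℤ)
    (hP : IsGraphPolynomial P)
    (hnz : ∀ (n : ℕ), 0 < n → ∀ G : SimpleGraph (Fin n), P n G ≠ 0)
    (hbound : ∀ (n : ℕ), 0 < n → ∀ (G : SimpleGraph (Fin n)) (i : ℕ),
        |(P n G).coeff i| ≤ (n : ℤ) ^ r)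
    (P₁ : ∀ n : ℕ, SimpleGraph (Fin n) → Polynomial ℤ)
    (hP₁ : ∀ (n : ℕ) (G : SimpleGraph (Fin n)),
        P₁ n G = (P n G).comp (C ((n : ℤ) ^ r) * X)) :
    (∀ (n₁ n₂ : ℕ) (G₁ : SimpleGraph (Fin n₁)) (G₂ : SimpleGraph (Fin n₂)),
        0 < n₁ → 0 < n₂ → SimilarGraphs G₁ G₂ →
        (P n₁ G₁ = P n₂ G₂ ↔ P₁ n₁ G₁ = P₁ n₂ G₂)) ∧
    ∀ (n : ℕ), 0 < n → ∀ (G : SimpleGraph (Fin n)) (ξ : ℂ),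
      aeval ξ (P₁ n G) = 0 → ‖ξ‖ ≤ 2 := by
  constructor
  · rintro n₁ n₂ G₁ G₂ h₁ h₂ ⟨hn, -, -⟩
    subst hn
    rw [hP₁, hP₁]
    constructor
    · intro h; rw [h]
    · intro h
      ext i
      have := congrArg (fun q => Polynomial.coeff q i) h
      simp only [coeff_comp_C_mul_X] at this
      have hc : ((n₁ : ℤ) ^ r) ^ i ≠ 0 := by positivity
      exact mul_right_cancel₀ hc this
  · intro n hn G ξ hroot
    set p := P n G with hp
    set c : ℤ := (n : ℤ) ^ r with hc
    have hc1 : (1 : ℤ) ≤ c := one_le_pow₀ (by exact_mod_cast hn)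
    rw [hP₁, aeval_comp] at hroot
    simp only [map_mul, aeval_C, aeval_X] at hroot
    set z : ℂ := (algebraMap ℤ ℂ) c * ξ with hz
    -- z is a root of the complex polynomial
    set q : Polynomial ℂ := p.map (Int.castRingHom ℂ) with hq
    have hq0 : q ≠ 0 := by
      rw [hq]
      exact (Polynomial.map_ne_zero_iff Int.cast_injective).mpr (hnz n hn G)
    have hzr : q.IsRoot z := by
      rw [Polynomial.IsRoot.def, hq, Polynomial.eval_map, ← algebraMap_int_eq,
        ← Polynomial.aeval_def]
      exact hroot
    have hlt := Polynomial.IsRoot.norm_lt_cauchyBound hq0 hzr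
    -- bound cauchyBound q ≤ c + 1
    have hlead : (1 : NNReal) ≤ ‖q.leadingCoeff‖₊ := by
      have : q.leadingCoeff ≠ 0 := Polynomial.leadingCoeff_ne_zero.mpr hq0
      have h2 : q.leadingCoeff = (p.leadingCoeff : ℂ) := by
        rw [hq, Polynomial.leadingCoeff, Polynomial.leadingCoeff,
          Polynomial.natDegree_map_eq_of_injective Int.cast_injective,
          Polynomial.coeff_map, eq_intCast]
      have hl0 : p.leadingCoeff ≠ 0 := Polynomial.leadingCoeff_ne_zero.mpr (hnz n hn G)
      have : (1 : ℝ) ≤ ‖q.leadingCoeff‖ := by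
        rw [h2]
        rw [Complex.norm_intCast]
        exact_mod_cast Int.one_le_abs hl0
      exact_mod_cast this
    set cN : NNReal := (n : NNReal) ^ r with hcN
    have hcNR : ((cN : ℝ)) = ((c : ℝ)) := by
      simp [hcN, hc]
    have hcR1 : (1 : ℝ) ≤ (c : ℝ) := by exact_mod_cast hc1
    have hcb : q.cauchyBound ≤ cN + 1 := by
      unfold Polynomial.cauchyBound
      gcongr
      rw [div_le_iff₀ (by positivity)]
      calc Finset.sup (Finset.range q.natDegree) (‖q.coeff ·‖₊)
          ≤ cN := by
            apply Finset.sup_le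
            intro i _
            have h1 : ‖q.coeff i‖ ≤ (cN : ℝ) := by
              rw [hq, Polynomial.coeff_map, hcNR, eq_intCast, Complex.norm_intCast, hp, hc]
              exact_mod_cast hbound n hn G i
            exact_mod_cast h1
        _ ≤ cN * ‖q.leadingCoeff‖₊ := le_mul_of_one_le_right zero_le hlead
    have hzlt : ‖z‖ < (c : ℝ) + 1 := by
      have h2 := hlt.trans_le hcb
      have h' : (‖z‖₊ : ℝ) < ((cN : ℝ)) + 1 := by exact_mod_cast h2
      rw [hcNR] at h'
      simpa using h'
    have hznorm : ‖z‖ = (c : ℝ) * ‖ξ‖ := by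
      rw [hz, norm_mul]
      congr 1
      rw [algebraMap_int_eq, eq_intCast, Complex.norm_intCast]
      exact_mod_cast abs_of_nonneg (by positivity : (0:ℤ) ≤ c)
    rw [hznorm] at hzlt
    have hcpos : (0 : ℝ) < (c : ℝ) := lt_of_lt_of_le one_pos hcR1
    nlinarith [norm_nonneg ξ, hzlt, hcR1]
end
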